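/- Let H be a Hilbert space with a bounded self-adjoint non-negative Green operator G, harmonic projection H₀ (orthogonal projection), and densely defined closed operators ∂̄, ∂ satisfying: ∂̄∂̄*G + ∂̄*∂̄G = I - H₀, G∂̄ = ∂̄G, G∂̄* = ∂̄*G, H₀∂̄ = ∂̄H₀ = 0, H₀∂̄* = ∂̄*H₀ = 0, and G ≥ 0. Then for any g in the domain of ∂, ‖∂̄*G∂g‖² = ‖g‖² - ‖H₀g‖² - ⟨∂*g, G∂*g⟩ - ‖∂̄G∂g‖², and in particular ‖∂̄*G∂g‖² ≤ ‖g‖², provided the analogous Hodge identities hold for ∂ with the same G and H₀ (i.e. □_∂ = □_∂̄). -/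

import Mathlib

/-- Abstract quasi-isometry computation (Theorem 3.2): with the Hodge identities for the
common Green operator `G` and harmonic projection `H₀`,
`‖∂̄*G∂g‖² = ‖g‖² - ‖H₀g‖² - ⟪∂*g, G∂*g⟫ - ‖∂̄G∂g‖²`, hence `‖∂̄*G∂g‖² ≤ ‖g‖²`. -/
theorem stmt_8 {H : Type*} [NormedAddCommGroup H] [InnerProductSpace ℂ H] [CompleteSpace H]
    (G H₀ Db Dp Dbs Dps : H →L[ℂ] H)
    (hDbs : Dbs = ContinuousLinearMap.adjoint Db)
    (hDps : Dps = ContinuousLinearMap.adjoint Dp)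
    (hGsa : IsSelfAdjoint G) (hGnonneg : ∀ x : H, 0 ≤ (inner ℂ x (G x) : ℂ).re)
    (hH₀sa : IsSelfAdjoint H₀) (hH₀idem : H₀.comp H₀ = H₀)
    (hHodgeb : Db.comp (Dbs.comp G) + Dbs.comp (Db.comp G) = 1 - H₀)
    (hGDb : G.comp Db = Db.comp G) (hGDbs : G.comp Dbs = Dbs.comp G)
    (hH₀Db : H₀.comp Db = 0) (hDbH₀ : Db.comp H₀ = 0)
    (hH₀Dbs : H₀.comp Dbs = 0) (hDbsH₀ : Dbs.comp H₀ = 0)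
    (hHodgep : Dp.comp (Dps.comp G) + Dps.comp (Dp.comp G) = 1 - H₀)
    (hGDp : G.comp Dp = Dp.comp G) (hGDps : G.comp Dps = Dps.comp G)
    (hH₀Dp : H₀.comp Dp = 0) (hDpH₀ : Dp.comp H₀ = 0)
    (hH₀Dps : H₀.comp Dps = 0) (hDpsH₀ : Dps.comp H₀ = 0) :
    ∀ g : H,
      ‖Dbs (G (Dp g))‖ ^ 2 =
        ‖g‖ ^ 2 - ‖H₀ g‖ ^ 2 - (inner ℂ (Dps g) (G (Dps g)) : ℂ).re - ‖Db (G (Dp g))‖ ^ 2 ∧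
      ‖Dbs (G (Dp g))‖ ^ 2 ≤ ‖g‖ ^ 2 := by
  intro g
  have hre : ∀ x y : H, (inner ℂ x y : ℂ).re = (inner ℂ y x : ℂ).re := by
    intro x y
    rw [← inner_conj_symm x y, Complex.conj_re]
  have hself : ∀ x : H, (inner ℂ x x : ℂ).re = ‖x‖ ^ 2 := by
    intro x
    have := inner_self_eq_norm_sq (𝕜 := ℂ) (x := x)
    simpa using this
  have adjDb : ∀ x y : H, (inner ℂ (Dbs x) y : ℂ) = inner ℂ x (Db y) := by
    intro x y; rw [hDbs, ContinuousLinearMap.adjoint_inner_left]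
  have adjDp : ∀ x y : H, (inner ℂ (Dps x) y : ℂ) = inner ℂ x (Dp y) := by
    intro x y; rw [hDps, ContinuousLinearMap.adjoint_inner_left]
  have adjDb' : ∀ x y : H, (inner ℂ x (Dbs y) : ℂ) = inner ℂ (Db x) y := by
    intro x y; rw [hDbs, ContinuousLinearMap.adjoint_inner_right]
  -- Hodge identity for ∂̄ applied to ∂g
  have hH0Dpg : H₀ (Dp g) = 0 := by
    have := DFunLike.congr_fun hH₀Dp g
    simpa using this
  have hodgeb : Db (Dbs (G (Dp g))) + Dbs (Db (G (Dp g))) = Dp g := by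
    have := DFunLike.congr_fun hHodgeb (Dp g)
    simp only [ContinuousLinearMap.add_apply, ContinuousLinearMap.comp_apply,
      ContinuousLinearMap.sub_apply, ContinuousLinearMap.one_apply] at this
    rw [hH0Dpg, sub_zero] at this
    exact this
  have h1 : ‖Dbs (G (Dp g))‖ ^ 2 + ‖Db (G (Dp g))‖ ^ 2
      = (inner ℂ (G (Dp g)) (Dp g) : ℂ).re := by
    have e : (inner ℂ (Dbs (G (Dp g))) (Dbs (G (Dp g))) : ℂ)
        + inner ℂ (Db (G (Dp g))) (Db (G (Dp g)))
        = inner ℂ (G (Dp g)) (Dp g) := by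
      rw [adjDb (G (Dp g)) (Dbs (G (Dp g))), ← adjDb' (G (Dp g)) (Db (G (Dp g))),
        ← inner_add_right, hodgeb]
    have := congrArg Complex.re e
    rw [Complex.add_re, hself, hself] at this
    exact this
  -- Hodge identity for ∂ applied to g
  have hodgep : Dp (Dps (G g)) + Dps (Dp (G g)) = g - H₀ g := by
    have := DFunLike.congr_fun hHodgep g
    simpa only [ContinuousLinearMap.add_apply, ContinuousLinearMap.comp_apply,
      ContinuousLinearMap.sub_apply, ContinuousLinearMap.one_apply] using this
  have cGDp : G (Dp g) = Dp (G g) := by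
    have := DFunLike.congr_fun hGDp g; simpa using this
  have cGDps : G (Dps g) = Dps (G g) := by
    have := DFunLike.congr_fun hGDps g; simpa using this
  -- ⟪G∂g, ∂g⟫ = ⟪g, ∂*∂Gg⟫ in real part
  have h2a : (inner ℂ (G (Dp g)) (Dp g) : ℂ).re = (inner ℂ g (Dps (Dp (G g))) : ℂ).re := by
    rw [← adjDp (G (Dp g)) g, hre, cGDp]
  have h2b : (inner ℂ (Dps g) (G (Dps g)) : ℂ).re = (inner ℂ g (Dp (Dps (G g))) : ℂ).re := by
    rw [cGDps, adjDp g (Dps (G g))]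
  have hH0 : (inner ℂ g (H₀ g) : ℂ).re = ‖H₀ g‖ ^ 2 := by
    have hidem : H₀ g = H₀ (H₀ g) := by
      have := DFunLike.congr_fun hH₀idem g
      simpa using this.symm
    have hadj : ContinuousLinearMap.adjoint H₀ = H₀ :=
      ContinuousLinearMap.isSelfAdjoint_iff'.mp hH₀sa
    calc (inner ℂ g (H₀ g) : ℂ).re = (inner ℂ g (H₀ (H₀ g)) : ℂ).re := by rw [← hidem]
      _ = (inner ℂ (H₀ g) (H₀ g) : ℂ).re := by
          rw [← ContinuousLinearMap.adjoint_inner_left, hadj]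
      _ = ‖H₀ g‖ ^ 2 := hself _
  have h2 : (inner ℂ (G (Dp g)) (Dp g) : ℂ).re + (inner ℂ (Dps g) (G (Dps g)) : ℂ).re
      = ‖g‖ ^ 2 - ‖H₀ g‖ ^ 2 := by
    rw [h2a, h2b]
    have e : (inner ℂ g (Dps (Dp (G g))) : ℂ) + inner ℂ g (Dp (Dps (G g)))
        = inner ℂ g g - inner ℂ g (H₀ g) := by
      rw [← inner_add_right, add_comm (Dps (Dp (G g))) (Dp (Dps (G g))), hodgep,
        inner_sub_right]
    have := congrArg Complex.re e
    rw [Complex.add_re, Complex.sub_re, hself, hH0] at this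
    linarith [this]
  have hGpos : 0 ≤ (inner ℂ (Dps g) (G (Dps g)) : ℂ).re := hGnonneg (Dps g)
  constructor
  · linarith
  · nlinarith [sq_nonneg ‖Db (G (Dp g))‖, sq_nonneg ‖H₀ g‖]
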